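/- arXiv:math/9902092 — 2 statements merged into one kernel-verified Lean document; each statement's English description precedes it below -/
import Mathlib

section
/- Let L be a lattice containing the hyperbolic plane H as a direct summand, and let x ∈ H ⊂ L be a primitive isotropic element (⟨x,x⟩ = 0). Then for any z ∈ L with ⟨z,x⟩ = 1, the element z is equivalent under O(L) to the element of H with coordinates (⟨z,z⟩/2 appropriately placed, i.e. the element a·e + f where e,f are the standard basis of H with ⟨e,e⟩=⟨f,f⟩=0, ⟨e,f⟩=1, and 2a = ⟨z,z⟩). -/
/-- If an even lattice L has a hyperbolic plane H = ⟨e,f⟩ as an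
orthogonal direct summand, then any z ∈ L with ⟨z,e⟩ = 1 is equivalent under
O(L) to the element a•e + f of H where 2a = ⟨z,z⟩. -/
theorem stmt_1 (L : Type) [AddCommGroup L] [Module ℤ L]
    (B : L →ₗ[ℤ] L →ₗ[ℤ] ℤ)
    (hsymm : ∀ x y : L, B x y = B y x)
    (e f : L)
    (he : B e e = 0) (hf : B f f = 0) (hef : B e f = 1)
    (W : Submodule ℤ L)
    (horth : ∀ w ∈ W, B e w = 0 ∧ B f w = 0)
    (hsplit : ∀ x : L, ∃ (a b : ℤ) (w : L), w ∈ W ∧ x = a • e + b • f + w)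
    (heven : ∀ v : L, Even (B v v))
    (z : L) (hz : B z e = 1) :
    ∃ (a : ℤ) (g : L ≃ₗ[ℤ] L), 2 * a = B z z ∧
      (∀ u v : L, B (g u) (g v) = B u v) ∧ g z = a • e + f := by
  obtain ⟨a, b, w, hw, hzdef⟩ := hsplit z
  obtain ⟨hew, hfw⟩ := horth w hw
  have hwe : B w e = 0 := by rw [hsymm]; exact hew
  have hwf : B w f = 0 := by rw [hsymm]; exact hfw
  have hfe : B f e = 1 := by rw [hsymm]; exact hef
  obtain ⟨q, hq⟩ := heven w
  -- bilinearity helpers (zsmul versions)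
  have Bsm2 : ∀ (x : L) (n : ℤ) (y : L), B x (n • y) = n * B x y := by
    intro x n y; rw [map_zsmul]; exact zsmul_eq_mul ..
  have Bsm1 : ∀ (n : ℤ) (x y : L), B (n • x) y = n * B x y := by
    intro n x y; rw [hsymm, Bsm2, hsymm]
  have Badd1 : ∀ x y u : L, B (x + y) u = B x u + B y u := by
    intro x y u; rw [map_add, LinearMap.add_apply]
  have Bsub1 : ∀ x y u : L, B (x - y) u = B x u - B y u := by
    intro x y u; rw [map_sub, LinearMap.sub_apply]
  have Badd2 : ∀ u x y : L, B u (x + y) = B u x + B u y := by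
    intro u x y; rw [map_add]
  have Bsub2 : ∀ u x y : L, B u (x - y) = B u x - B u y := by
    intro u x y; rw [map_sub]
  have hb : b = 1 := by
    have h1 := hz
    rw [hzdef, Badd1, Badd1, Bsm1, Bsm1, he, hfe, hwe] at h1
    linarith
  subst hb
  -- the Eichler transvection and its inverse, as plain functions
  set φ : L → L := fun v => v - B v e • w + (B v w - q * B v e) • e with hφ
  set ψ : L → L := fun v => v + B v e • w - (B v w + q * B v e) • e with hψ
  -- expansions of B against φ-like vectors
  have Bexp1 : ∀ (v : L) (s t : ℤ) (u : L),
      B (v - s • w + t • e) u = B v u - s * B w u + t * B e u := by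
    intro v s t u; rw [Badd1, Bsub1, Bsm1, Bsm1]
  have Bexp1' : ∀ (v : L) (s t : ℤ) (u : L),
      B (v + s • w - t • e) u = B v u + s * B w u - t * B e u := by
    intro v s t u; rw [Bsub1, Badd1, Bsm1, Bsm1]
  have Bexp2 : ∀ (x v : L) (s t : ℤ),
      B x (v - s • w + t • e) = B x v - s * B x w + t * B x e := by
    intro x v s t; rw [Badd2, Bsub2, Bsm2, Bsm2]
  have hφe : ∀ v : L, B (φ v) e = B v e := by
    intro v; show B (v - B v e • w + (B v w - q * B v e) • e) e = B v e
    rw [Bexp1, hwe, he]; ring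
  have hφw : ∀ v : L, B (φ v) w = B v w - (q + q) * B v e := by
    intro v; show B (v - B v e • w + (B v w - q * B v e) • e) w = _
    rw [Bexp1, hq, hew]; ring
  have hφu : ∀ v u : L, B (φ v) u = B v u - B v e * B w u + (B v w - q * B v e) * B e u := by
    intro v u; exact Bexp1 v (B v e) (B v w - q * B v e) u
  have hinv1 : ∀ v : L, ψ (φ v) = v := by
    intro v
    show φ v + B (φ v) e • w - (B (φ v) w + q * B (φ v) e) • e = v
    rw [hφe, hφw, hφ]
    simp only [← Int.cast_smul_eq_zsmul ℤ, Int.cast_id]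
    module
  have hinv2 : ∀ v : L, φ (ψ v) = v := by
    intro v
    have h1 : B (ψ v) e = B v e := by
      show B (v + B v e • w - (B v w + q * B v e) • e) e = B v e
      rw [Bexp1', hwe, he]; ring
    have h2 : B (ψ v) w = B v w + (q + q) * B v e := by
      show B (v + B v e • w - (B v w + q * B v e) • e) w = _
      rw [Bexp1', hq, hew]; ring
    show ψ v - B (ψ v) e • w + (B (ψ v) w - q * B (ψ v) e) • e = v
    rw [h1, h2, hψ]
    simp only [← Int.cast_smul_eq_zsmul ℤ, Int.cast_id]
    module
  have hadd : ∀ x y : L, φ (x + y) = φ x + φ y := by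
    intro x y
    show (x + y) - B (x + y) e • w + (B (x + y) w - q * B (x + y) e) • e
        = (x - B x e • w + (B x w - q * B x e) • e) + (y - B y e • w + (B y w - q * B y e) • e)
    rw [Badd1, Badd1]
    simp only [← Int.cast_smul_eq_zsmul ℤ, Int.cast_id]
    module
  have hsmulz : ∀ (r : ℤ) (x : L), φ (r • x) = r • φ x := by
    intro r x
    show (r • x) - B (r • x) e • w + (B (r • x) w - q * B (r • x) e) • e
        = r • (x - B x e • w + (B x w - q * B x e) • e)
    rw [Bsm1, Bsm1]
    simp only [← Int.cast_smul_eq_zsmul ℤ, Int.cast_id]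
    module
  set g : L ≃ₗ[ℤ] L :=
    { toFun := φ
      invFun := ψ
      left_inv := hinv1
      right_inv := hinv2
      map_add' := hadd
      map_smul' := by
        intro r x
        simp only [RingHom.id_apply]
        exact ((congrArg φ (Int.cast_smul_eq_zsmul ℤ r x)).trans (hsmulz r x)).trans
          (Int.cast_smul_eq_zsmul ℤ r (φ x)).symm } with hg
  have hgapp : ∀ v : L, g v = φ v := fun v => rfl
  have hiso : ∀ u v : L, B (g u) (g v) = B u v := by
    intro u v
    rw [hgapp, hgapp]
    have : B (φ u) (φ v)
        = B (φ u) v - B v e * B (φ u) w + (B v w - q * B v e) * B (φ u) e :=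
      Bexp2 (φ u) v (B v e) (B v w - q * B v e)
    rw [this, hφu, hφw, hφe, hsymm w v, hsymm e v]
    ring
  refine ⟨a + q, g, ?_, hiso, ?_⟩
  · have h1 : B z w = q + q := by
      rw [hzdef, Badd1, Badd1, Bsm1, Bsm1, hew, hfw, hq]; ring
    have h2 : B z z = 2 * a + (q + q) := by
      rw [hzdef]
      simp only [Badd1, Bsm1, Badd2, Bsm2, he, hf, hef, hfe, hew, hfw, hwe, hwf, hq]
      ring
    rw [h2]; ring
  · rw [hgapp]
    have h1 : B z w = q + q := by
      rw [hzdef, Badd1, Badd1, Bsm1, Bsm1, hew, hfw, hq]; ring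
    show z - B z e • w + (B z w - q * B z e) • e = (a + q) • e + f
    rw [hz, h1, hzdef]
    simp only [← Int.cast_smul_eq_zsmul ℤ, Int.cast_id]
    module
end

section
/- Let G be a group acting faithfully on a free abelian group of finite rank n (i.e. G embeds into GL_n(Z)). If every element of G has finite order, then G is finite, with order bounded by a constant depending only on n (for instance, |G| ≤ |GL_n(Z/3Z)|). -/
open Matrix

private lemma expand_pow {R : Type*} [Ring R] (x : R) (p : ℕ) :
    ∃ S : R, (1 + x) ^ p = 1 + p • x + x * x * S := by
  induction p with
  | zero => exact ⟨0, by simp⟩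
  | succ p ih =>
    obtain ⟨S, hS⟩ := ih
    refine ⟨p • 1 + S + S * x, ?_⟩
    rw [pow_succ, hS]
    simp only [add_mul, mul_add, mul_one, one_mul, succ_nsmul, smul_mul_assoc,
      mul_smul_comm, mul_assoc]
    abel

private lemma expand_cube {R : Type*} [Ring R] (x : R) :
    (1 + x) ^ 3 = 1 + (3 : ℕ) • x + (3 : ℕ) • (x * x) + x * (x * x) := by
  rw [pow_succ, pow_succ, pow_one]
  simp only [add_mul, mul_add, mul_one, one_mul, mul_assoc]
  abel

private lemma smul_sq {n : ℕ} (a : ℤ) (C : Matrix (Fin n) (Fin n) ℤ) :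
    (a • C) * (a • C) = (a * a) • (C * C) := by
  rw [smul_mul_assoc, mul_smul_comm, smul_smul]

private lemma step {n : ℕ} (A C : Matrix (Fin n) (Fin n) ℤ) (p k : ℕ) (hp : p.Prime)
    (hk : 1 ≤ k) (hA : A ^ p = 1) (hAC : A = 1 + ((3:ℤ)^k) • C) :
    ∀ i j, (3:ℤ) ∣ C i j := by
  have h3pow : ((3:ℤ)^(k+1)) ≠ 0 := by positivity
  intro i j
  by_cases h3 : p = 3
  · subst h3
    have hx := expand_cube ((3:ℤ)^k • C)
    rw [← hAC, hA, smul_sq, smul_mul_assoc, mul_smul_comm, smul_smul] at hx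
    have h0 := congrFun (congrFun hx i) j
    simp only [Matrix.add_apply, Matrix.smul_apply] at h0
    simp only [nsmul_eq_mul, smul_eq_mul, Nat.cast_ofNat] at h0
    set a := C i j with ha
    set b := (C * C) i j with hb
    set c := (C * (C * C)) i j with hc
    have key : (3:ℤ)^(k+1) * a = -(3 * ((3^k * 3^k) * b) + (3^k * (3^k * 3^k)) * c) := by
      ring_nf
      ring_nf at h0
      linarith [h0]
    have d1 : (3:ℤ)^(k+2) ∣ 3 * ((3^k * 3^k) * b) := by
      have e1 : (3:ℤ) * (3^k * 3^k) = 3^(2*k+1) := by ring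
      rw [← mul_assoc, e1]
      exact Dvd.dvd.mul_right (pow_dvd_pow 3 (by omega)) b
    have d2 : (3:ℤ)^(k+2) ∣ (3^k * (3^k * 3^k)) * c := by
      have e2 : (3:ℤ)^k * (3^k * 3^k) = 3^(3*k) := by ring
      rw [e2]
      exact Dvd.dvd.mul_right (pow_dvd_pow 3 (by omega)) c
    have hdvd : (3:ℤ)^(k+1) * 3 ∣ (3:ℤ)^(k+1) * a := by
      rw [key, ← pow_succ]
      exact dvd_neg.mpr (dvd_add d1 d2)
    exact (mul_dvd_mul_iff_left h3pow).mp hdvd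
  · obtain ⟨S, hS⟩ := expand_pow ((3:ℤ)^k • C) p
    rw [← hAC, hA, smul_sq, smul_mul_assoc] at hS
    have h0 := congrFun (congrFun hS i) j
    simp only [Matrix.add_apply, Matrix.smul_apply] at h0
    simp only [nsmul_eq_mul, smul_eq_mul] at h0
    set a := C i j with ha
    set e := (C * C * S) i j with he
    have h1 : (3:ℤ)^k * ((p:ℤ) * a) = (3:ℤ)^k * (-((3:ℤ)^k * e)) := by
      ring_nf
      ring_nf at h0
      linarith [h0]
    have h2 : (p:ℤ) * a = -((3:ℤ)^k * e) :=
      mul_left_cancel₀ (by positivity : ((3:ℤ)^k) ≠ 0) h1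
    have h3a : (3:ℤ) ∣ (p:ℤ) * a := by
      rw [h2]
      exact dvd_neg.mpr ((dvd_pow_self 3 (by omega)).mul_right e)
    rcases (Int.prime_three.dvd_mul).mp h3a with h | h
    · exfalso
      have : (3:ℕ) ∣ p := by exact_mod_cast h
      exact h3 ((Nat.prime_dvd_prime_iff_eq Nat.prime_three hp).mp this).symm
    · exact h

private lemma div_matrix {n : ℕ} (C : Matrix (Fin n) (Fin n) ℤ) (h : ∀ i j, (3:ℤ) ∣ C i j) :
    ∃ D : Matrix (Fin n) (Fin n) ℤ, C = (3:ℤ) • D := by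
  refine ⟨Matrix.of fun i j => C i j / 3, ?_⟩
  ext i j
  simp only [Matrix.smul_apply, Matrix.of_apply, smul_eq_mul]
  exact (Int.mul_ediv_cancel' (h i j)).symm

private lemma minkowski {n : ℕ} (A : Matrix (Fin n) (Fin n) ℤ) (p : ℕ) (hp : p.Prime)
    (hA : A ^ p = 1) (h3 : A.map (Int.cast : ℤ → ZMod 3) = 1) : A = 1 := by
  have hsub : ∀ i j, (3:ℤ) ∣ (A - 1) i j := by
    intro i j
    have h := congrFun (congrFun h3 i) j
    simp only [Matrix.map_apply, Matrix.one_apply] at h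
    have hz : (((A - 1) i j : ℤ) : ZMod 3) = 0 := by
      simp only [Matrix.sub_apply, Matrix.one_apply]
      push_cast
      rw [h]
      split <;> simp
    exact_mod_cast (ZMod.intCast_zmod_eq_zero_iff_dvd _ 3).mp hz
  have iter : ∀ t : ℕ, ∃ C, A = 1 + ((3:ℤ)^(t+1)) • C := by
    intro t
    induction t with
    | zero =>
      obtain ⟨D, hD⟩ := div_matrix (A - 1) hsub
      refine ⟨D, ?_⟩
      rw [pow_one, ← hD]
      abel
    | succ t ih =>
      obtain ⟨C, hC⟩ := ih
      obtain ⟨D, hD⟩ := div_matrix C (step A C p (t+1) hp (by omega) hA hC)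
      refine ⟨D, ?_⟩
      rw [hC, hD, smul_smul, ← pow_succ]
  have key : ∀ i j, ∀ t : ℕ, (3:ℤ)^(t+1) ∣ (A - 1) i j := by
    intro i j t
    obtain ⟨C, hC⟩ := iter t
    have hC' : A - 1 = ((3:ℤ)^(t+1)) • C := by rw [hC]; abel
    refine ⟨C i j, ?_⟩
    rw [hC']
    simp [Matrix.smul_apply]
  have hzero : A - 1 = 0 := by
    ext i j
    rw [Matrix.zero_apply]
    by_contra hne
    have hdvd := key i j ((A - 1) i j).natAbs
    have hle : (3:ℤ)^(((A - 1) i j).natAbs+1) ≤ |(A - 1) i j| :=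
      Int.le_of_dvd (abs_pos.mpr hne) ((dvd_abs _ _).mpr hdvd)
    have hlt : ((((A - 1) i j).natAbs : ℤ)) < (3:ℤ)^(((A - 1) i j).natAbs+1) := by
      have h1 : ((A - 1) i j).natAbs < 3 ^ ((A - 1) i j).natAbs := Nat.lt_pow_self (by norm_num : 1 < 3)
      have h2 : (3:ℕ)^(((A - 1) i j).natAbs) ≤ 3^(((A - 1) i j).natAbs+1) :=
        Nat.pow_le_pow_right (by norm_num) (by omega)
      exact_mod_cast lt_of_lt_of_le h1 h2
    rw [Int.abs_eq_natAbs] at hle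
    linarith
  rw [sub_eq_zero] at hzero
  exact hzero

/-- A group embedding into GL_n(ℤ) all of whose elements have finite
order is finite, with order bounded by |GL_n(ℤ/3ℤ)|. -/
theorem stmt_5 (n : ℕ) (G : Type) [Group G]
    (ρ : G →* Matrix.GeneralLinearGroup (Fin n) ℤ)
    (hinj : Function.Injective ρ)
    (htors : ∀ g : G, IsOfFinOrder g) :
    Finite G ∧ Nat.card G ≤ Nat.card (Matrix.GeneralLinearGroup (Fin n) (ZMod 3)) := by
  classical
  set φ : Matrix.GeneralLinearGroup (Fin n) ℤ →* Matrix.GeneralLinearGroup (Fin n) (ZMod 3) :=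
    Units.map ((RingHom.mapMatrix (Int.castRingHom (ZMod 3))).toMonoidHom) with hφ
  have hφinj : Function.Injective (φ.comp ρ) := by
    rw [injective_iff_map_eq_one]
    intro g hg
    apply hinj
    rw [_root_.map_one]
    set u := ρ g with hu
    have hg' : φ u = 1 := hg
    have hred : ((u : Matrix (Fin n) (Fin n) ℤ)).map (Int.cast : ℤ → ZMod 3) = 1 := by
      have hval : ((φ u : Matrix.GeneralLinearGroup (Fin n) (ZMod 3)) :
          Matrix (Fin n) (Fin n) (ZMod 3)) = 1 := by rw [hg']; rfl
      rw [hφ] at hval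
      simpa [RingHom.mapMatrix_apply] using hval
    show u = 1
    by_contra hne
    have hfin : IsOfFinOrder u := ρ.isOfFinOrder (htors g)
    have hmpos : 0 < orderOf u := hfin.orderOf_pos
    have hm1 : orderOf u ≠ 1 := fun h => hne (orderOf_eq_one_iff.mp h)
    obtain ⟨p, hp, hpd⟩ := Nat.exists_prime_and_dvd hm1
    set m := orderOf u with hm
    have hvpow : (u ^ (m / p)) ^ p = 1 := by
      rw [← pow_mul, Nat.div_mul_cancel hpd, hm, pow_orderOf_eq_one]
    have hmat : ((u ^ (m / p) : Matrix.GeneralLinearGroup (Fin n) ℤ) :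
        Matrix (Fin n) (Fin n) ℤ) ^ p = 1 := by
      rw [← Units.val_pow_eq_pow_val, hvpow, Units.val_one]
    have hredv : (((u ^ (m / p) : Matrix.GeneralLinearGroup (Fin n) ℤ) :
        Matrix (Fin n) (Fin n) ℤ)).map (Int.cast : ℤ → ZMod 3) = 1 := by
      have : (Int.castRingHom (ZMod 3)).mapMatrix
          ((u : Matrix (Fin n) (Fin n) ℤ) ^ (m / p)) = 1 := by
        rw [map_pow]
        rw [show (Int.castRingHom (ZMod 3)).mapMatrix (u : Matrix (Fin n) (Fin n) ℤ) = 1 by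
          simpa [RingHom.mapMatrix_apply] using hred]
        simp
      simpa [RingHom.mapMatrix_apply, Units.val_pow_eq_pow_val] using this
    have hv1 : u ^ (m / p) = 1 := Units.ext (minkowski _ p hp hmat hredv)
    have hdvd2 : m ∣ m / p := orderOf_dvd_of_pow_eq_one hv1
    have hpos2 : 0 < m / p := Nat.div_pos (Nat.le_of_dvd hmpos hpd) hp.pos
    have hle2 : m ≤ m / p := Nat.le_of_dvd hpos2 hdvd2
    have hlt : m / p < m := Nat.div_lt_self hmpos hp.one_lt
    omega
  constructor
  · exact Finite.of_injective _ hφinj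
  · exact Nat.card_le_card_of_injective _ hφinj
end
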